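/- Let d ≥ 1, let Ω be a skew-symmetric (d+1)×(d+1) real matrix and X : [0,∞) → ℝ^{d+1} continuous. Let x_1, x_2, x_3, x_4 : [0,∞) → S^d be differentiable curves each satisfying ẋ(t) = Ωx(t) + X(t) − ⟨x(t),X(t)⟩x(t), with x_1(0) ≠ x_2(0), x_2(0) ≠ x_3(0), x_3(0) ≠ x_4(0) and x_4(0) ≠ x_1(0). Then the cross ratio is a constant of motion: C(x_1(t), x_2(t), x_3(t), x_4(t)) = C(x_1(0), x_2(0), x_3(0), x_4(0)) for all t ≥ 0. -/

import Mathlib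

open MeasureTheory Metric Filter Matrix
open scoped RealInnerProductSpace

noncomputable abbrev Euc (d : ℕ) : Type := EuclideanSpace ℝ (Fin (d+1))

/-- The cross ratio of four points. -/
noncomputable def crossRatio {d : ℕ} (x1 x2 x3 x4 : Euc d) : ℝ :=
  (‖x1 - x2‖ ^ 2 * ‖x3 - x4‖ ^ 2) / (‖x2 - x3‖ ^ 2 * ‖x4 - x1‖ ^ 2)

lemma skew_inner_self {d : ℕ} (Ω : Matrix (Fin (d+1)) (Fin (d+1)) ℝ) (hΩ : Ωᵀ = -Ω)
    (v : Euc d) : ⟪v, Matrix.toEuclideanLin Ω v⟫ = 0 := by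
  set w : Fin (d+1) → ℝ := WithLp.equiv 2 _ v with hw
  have h : ⟪v, Matrix.toEuclideanLin Ω v⟫ = w ⬝ᵥ (Ω *ᵥ w) := by
    simp only [PiLp.inner_apply, RCLike.inner_apply, starRingEnd_apply, star_trivial,
      dotProduct]
    exact Finset.sum_congr rfl fun i _ => by rw [mul_comm]; rfl
  have h2 : w ⬝ᵥ (Ω *ᵥ w) = -(w ⬝ᵥ (Ω *ᵥ w)) := by
    calc w ⬝ᵥ (Ω *ᵥ w) = (w ᵥ* Ω) ⬝ᵥ w := by rw [Matrix.dotProduct_mulVec]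
    _ = (Ωᵀ *ᵥ w) ⬝ᵥ w := by rw [Matrix.mulVec_transpose]
    _ = ((-Ω) *ᵥ w) ⬝ᵥ w := by rw [hΩ]
    _ = -(w ⬝ᵥ (Ω *ᵥ w)) := by rw [Matrix.neg_mulVec, neg_dotProduct,
        dotProduct_comm]
  rw [h]; linarith

lemma pair_dist_sq {d : ℕ}
    (Ω : Matrix (Fin (d+1)) (Fin (d+1)) ℝ) (hΩ : Ωᵀ = -Ω)
    (X : ℝ → Euc d) (hX : ContinuousOn X (Set.Ici 0))
    (y z : ℝ → Euc d)
    (hy1 : ∀ t ≥ (0:ℝ), ‖y t‖ = 1) (hz1 : ∀ t ≥ (0:ℝ), ‖z t‖ = 1)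
    (hyD : ∀ t ≥ (0:ℝ), HasDerivWithinAt y
      (Matrix.toEuclideanLin Ω (y t) + X t - ⟪y t, X t⟫ • y t) (Set.Ici 0) t)
    (hzD : ∀ t ≥ (0:ℝ), HasDerivWithinAt z
      (Matrix.toEuclideanLin Ω (z t) + X t - ⟪z t, X t⟫ • z t) (Set.Ici 0) t)
    (t : ℝ) (ht : 0 ≤ t) :
    ‖y t - z t‖ ^ 2 = ‖y 0 - z 0‖ ^ 2 *
      Real.exp (-((∫ s in (0:ℝ)..t, ⟪y s, X s⟫) + ∫ s in (0:ℝ)..t, ⟪z s, X s⟫)) := by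
  -- continuity of the curves
  have hyc : ContinuousOn y (Set.Ici 0) := fun u hu => (hyD u hu).continuousWithinAt
  have hzc : ContinuousOn z (Set.Ici 0) := fun u hu => (hzD u hu).continuousWithinAt
  set g : ℝ → ℝ := fun s => ⟪y s, X s⟫ + ⟪z s, X s⟫ with hg
  have hgc : ContinuousOn g (Set.Ici 0) := (hyc.inner hX).add (hzc.inner hX)
  set G : ℝ → ℝ := fun u => ∫ s in (0:ℝ)..u, g s with hG
  set F : ℝ → ℝ := fun u => ‖y u - z u‖ ^ 2 * Real.exp (G u) with hF
  -- derivative of F is zero on the right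
  have hderiv : ∀ x ∈ Set.Ico (0:ℝ) t, HasDerivWithinAt F 0 (Set.Ici x) x := by
    intro x hx
    have hx0 : (0:ℝ) ≤ x := hx.1
    have hsub : Set.Ici x ⊆ Set.Ici (0:ℝ) := Set.Ici_subset_Ici.mpr hx0
    set a : ℝ := ⟪y x, X x⟫
    set b : ℝ := ⟪z x, X x⟫
    set dy : Euc d := Matrix.toEuclideanLin Ω (y x) + X x - a • y x
    set dz : Euc d := Matrix.toEuclideanLin Ω (z x) + X x - b • z x
    have hy' : HasDerivWithinAt y dy (Set.Ici x) x := (hyD x hx0).mono hsub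
    have hz' : HasDerivWithinAt z dz (Set.Ici x) x := (hzD x hx0).mono hsub
    have hw : HasDerivWithinAt (fun u => y u - z u) (dy - dz) (Set.Ici x) x := hy'.sub hz'
    have hin : HasDerivWithinAt (fun u => ⟪y u - z u, y u - z u⟫)
        (⟪y x - z x, dy - dz⟫ + ⟪dy - dz, y x - z x⟫) (Set.Ici x) x :=
      HasDerivWithinAt.inner ℝ hw hw
    -- compute the derivative value
    have hyy : ⟪y x, y x⟫ = 1 := by
      rw [real_inner_self_eq_norm_sq, hy1 x hx0]; norm_num
    have hzz : ⟪z x, z x⟫ = 1 := by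
      rw [real_inner_self_eq_norm_sq, hz1 x hx0]; norm_num
    set c : ℝ := ⟪y x, z x⟫ with hc
    have hzy : ⟪z x, y x⟫ = c := real_inner_comm _ _
    have hsk : ⟪y x - z x, Matrix.toEuclideanLin Ω (y x - z x)⟫ = 0 :=
      skew_inner_self Ω hΩ _
    have hdiff : dy - dz = Matrix.toEuclideanLin Ω (y x - z x) + (b • z x - a • y x) := by
      simp only [dy, dz, map_sub]
      abel
    have hval1 : ⟪y x - z x, dy - dz⟫ = (a + b) * (c - 1) := by
      rw [hdiff, inner_add_right, hsk, zero_add, inner_sub_right,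
        real_inner_smul_right, real_inner_smul_right, inner_sub_left, inner_sub_left,
        hzy, hyy, hzz, hc]
      ring
    have hnw : ‖y x - z x‖ ^ 2 = 2 - 2 * c := by
      rw [← real_inner_self_eq_norm_sq, inner_sub_left, inner_sub_right, inner_sub_right,
        hyy, hzz, hzy, hc]
      ring
    have hinval : ⟪y x - z x, dy - dz⟫ + ⟪dy - dz, y x - z x⟫
        = -(g x) * ‖y x - z x‖ ^ 2 := by
      have hval2 : ⟪dy - dz, y x - z x⟫ = (a + b) * (c - 1) := by
        rw [real_inner_comm]; exact hval1
      rw [hval1, hval2, hnw]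
      simp only [hg, a, b]
      ring
    rw [hinval] at hin
    have hnorm : HasDerivWithinAt (fun u => ‖y u - z u‖ ^ 2)
        (-(g x) * ‖y x - z x‖ ^ 2) (Set.Ici x) x := by
      simpa only [real_inner_self_eq_norm_sq] using hin
    -- derivative of G
    have hgint : IntervalIntegrable g volume 0 x := by
      apply ContinuousOn.intervalIntegrable
      apply hgc.mono
      rw [Set.uIcc_of_le hx0]
      exact fun u hu => hu.1
    have hGd : HasDerivWithinAt G (g x) (Set.Ici x) x := by
      apply intervalIntegral.integral_hasDerivWithinAt_right hgint
      · exact ⟨Set.Ici 0, Filter.mem_of_superset self_mem_nhdsWithin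
          (Set.Ioi_subset_Ici_self.trans hsub),
          hgc.aestronglyMeasurable measurableSet_Ici⟩
      · exact (hgc x hx0).mono (Set.Ioi_subset_Ici_self.trans hsub)
    have hExp : HasDerivWithinAt (fun u => Real.exp (G u))
        (Real.exp (G x) * g x) (Set.Ici x) x := hGd.exp
    have := hnorm.fun_mul hExp
    refine this.congr_deriv ?_
    ring
  -- continuity of F on [0, t]
  have hIcc : Set.Icc (0:ℝ) t ⊆ Set.Ici 0 := fun u hu => hu.1
  have hGc : ContinuousOn G (Set.Icc 0 t) := by
    have : IntegrableOn g (Set.uIcc 0 t) volume := by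
      apply ContinuousOn.integrableOn_compact isCompact_uIcc
      apply hgc.mono
      rw [Set.uIcc_of_le ht]
      exact hIcc
    have := intervalIntegral.continuousOn_primitive_interval this
    rwa [Set.uIcc_of_le ht] at this
  have hFc : ContinuousOn F (Set.Icc 0 t) :=
    ((((hyc.sub hzc).norm).pow 2).mono hIcc).mul hGc.rexp
  -- F is constant
  have hconst := constant_of_has_deriv_right_zero hFc
    (fun x hx => hderiv x hx)
  have hFt : F t = F 0 := hconst t ⟨ht, le_refl t⟩
  have hG0 : G 0 = 0 := intervalIntegral.integral_same
  have hF0 : F 0 = ‖y 0 - z 0‖ ^ 2 := by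
    simp [F, hG0]
  have hGt : G t = (∫ s in (0:ℝ)..t, ⟪y s, X s⟫) + ∫ s in (0:ℝ)..t, ⟪z s, X s⟫ := by
    simp only [G, hg]
    apply intervalIntegral.integral_add
    · apply ContinuousOn.intervalIntegrable
      apply (hyc.inner hX).mono
      rw [Set.uIcc_of_le ht]; exact hIcc
    · apply ContinuousOn.intervalIntegrable
      apply (hzc.inner hX).mono
      rw [Set.uIcc_of_le ht]; exact hIcc
  have hEt : Real.exp (G t) ≠ 0 := Real.exp_ne_zero _
  have : ‖y t - z t‖ ^ 2 * Real.exp (G t) = ‖y 0 - z 0‖ ^ 2 := by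
    rw [← hF0, ← hFt]
  rw [← hGt, Real.exp_neg, eq_comm, mul_inv_eq_iff_eq_mul₀ hEt, ← this]

/-- the cross ratio is a constant of motion for the vector model on the sphere. -/
theorem crossRatio_constant_of_motion
    (d : ℕ) (hd : 1 ≤ d)
    (Ω : Matrix (Fin (d+1)) (Fin (d+1)) ℝ) (hΩ : Ωᵀ = -Ω)
    (X : ℝ → Euc d) (hX : ContinuousOn X (Set.Ici 0))
    (x₁ x₂ x₃ x₄ : ℝ → Euc d)
    (hS : ∀ i ∈ [x₁, x₂, x₃, x₄], ∀ t ≥ (0:ℝ), ‖i t‖ = 1)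
    (hODE : ∀ i ∈ [x₁, x₂, x₃, x₄], ∀ t ≥ (0:ℝ), HasDerivWithinAt i
      (Matrix.toEuclideanLin Ω (i t) + X t - ⟪i t, X t⟫ • i t) (Set.Ici 0) t)
    (h12 : x₁ 0 ≠ x₂ 0) (h23 : x₂ 0 ≠ x₃ 0) (h34 : x₃ 0 ≠ x₄ 0) (h41 : x₄ 0 ≠ x₁ 0) :
    ∀ t ≥ (0:ℝ), crossRatio (x₁ t) (x₂ t) (x₃ t) (x₄ t)
      = crossRatio (x₁ 0) (x₂ 0) (x₃ 0) (x₄ 0) := by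
  intro t ht
  have m1 : x₁ ∈ [x₁, x₂, x₃, x₄] := by simp
  have m2 : x₂ ∈ [x₁, x₂, x₃, x₄] := by simp
  have m3 : x₃ ∈ [x₁, x₂, x₃, x₄] := by simp
  have m4 : x₄ ∈ [x₁, x₂, x₃, x₄] := by simp
  set I₁ : ℝ := ∫ s in (0:ℝ)..t, ⟪x₁ s, X s⟫ with hI₁
  set I₂ : ℝ := ∫ s in (0:ℝ)..t, ⟪x₂ s, X s⟫ with hI₂
  set I₃ : ℝ := ∫ s in (0:ℝ)..t, ⟪x₃ s, X s⟫ with hI₃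
  set I₄ : ℝ := ∫ s in (0:ℝ)..t, ⟪x₄ s, X s⟫ with hI₄
  have k12 := pair_dist_sq Ω hΩ X hX x₁ x₂ (hS _ m1) (hS _ m2) (hODE _ m1) (hODE _ m2) t ht
  have k34 := pair_dist_sq Ω hΩ X hX x₃ x₄ (hS _ m3) (hS _ m4) (hODE _ m3) (hODE _ m4) t ht
  have k23 := pair_dist_sq Ω hΩ X hX x₂ x₃ (hS _ m2) (hS _ m3) (hODE _ m2) (hODE _ m3) t ht
  have k41 := pair_dist_sq Ω hΩ X hX x₄ x₁ (hS _ m4) (hS _ m1) (hODE _ m4) (hODE _ m1) t ht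
  rw [← hI₁, ← hI₂] at k12
  rw [← hI₃, ← hI₄] at k34
  rw [← hI₂, ← hI₃] at k23
  rw [← hI₄, ← hI₁] at k41
  unfold crossRatio
  rw [k12, k34, k23, k41]
  have hprod : Real.exp (-(I₁ + I₂)) * Real.exp (-(I₃ + I₄))
      = Real.exp (-(I₂ + I₃)) * Real.exp (-(I₄ + I₁)) := by
    rw [← Real.exp_add, ← Real.exp_add]
    ring_nf
  have hEne : Real.exp (-(I₂ + I₃)) * Real.exp (-(I₄ + I₁)) ≠ 0 :=
    mul_ne_zero (Real.exp_ne_zero _) (Real.exp_ne_zero _)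
  have hnum : ‖x₁ 0 - x₂ 0‖ ^ 2 * Real.exp (-(I₁ + I₂)) *
      (‖x₃ 0 - x₄ 0‖ ^ 2 * Real.exp (-(I₃ + I₄)))
      = ‖x₁ 0 - x₂ 0‖ ^ 2 * ‖x₃ 0 - x₄ 0‖ ^ 2
        * (Real.exp (-(I₂ + I₃)) * Real.exp (-(I₄ + I₁))) := by
    rw [← hprod]; ring
  have hden : ‖x₂ 0 - x₃ 0‖ ^ 2 * Real.exp (-(I₂ + I₃)) *
      (‖x₄ 0 - x₁ 0‖ ^ 2 * Real.exp (-(I₄ + I₁)))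
      = ‖x₂ 0 - x₃ 0‖ ^ 2 * ‖x₄ 0 - x₁ 0‖ ^ 2
        * (Real.exp (-(I₂ + I₃)) * Real.exp (-(I₄ + I₁))) := by
    ring
  rw [hnum, hden, mul_div_mul_right _ _ hEne]
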